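/- For all integers N ≥ 2 and n ≥ 1, B_{N,n} = (N/(N+n)) · ∑_{m=0}^{n−1} ∑_{1 ≤ i_m < ⋯ < i_1 < i_0 = n} B_{N−1,i_m} · ∏_{k=1}^{m} ( B_{N−1, i_{k−1}−i_k+1} · C(i_{k−1}, i_{k−1}−i_k+1) · N/(N+i_k) ), where the inner sum is over all strictly decreasing chains n = i_0 > i_1 > ⋯ > i_m ≥ 1 of positive integers (for m = 0 the summand is B_{N−1,n} and the product is empty), and C(a,b) denotes the binomial coefficient. -/

import Mathlib

/-- The power series ∑_{i≥0} (N!/(N+i)!) xⁱ over ℚ. -/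
noncomputable def hgSeries (N : ℕ) : PowerSeries ℚ :=
  PowerSeries.mk fun i => (N.factorial : ℚ) / ((N + i).factorial : ℚ)

/-- The hypergeometric Bernoulli number `B_{N,n}`, defined so that
`∑ (B_{N,n}/n!) xⁿ` is the multiplicative inverse of `hgSeries N` in ℚ[[x]]. -/
noncomputable def hB (N n : ℕ) : ℚ :=
  (n.factorial : ℚ) * PowerSeries.coeff n (hgSeries N)⁻¹

open PowerSeries Finset

lemma hg_coeff (N i : ℕ) : coeff i (hgSeries N) = (N.factorial : ℚ) / ((N + i).factorial : ℚ) := by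
  simp [hgSeries]

lemma hg_const (N : ℕ) : constantCoeff (hgSeries N) = 1 := by
  rw [← coeff_zero_eq_constantCoeff, hg_coeff]
  simp [Nat.factorial_ne_zero, div_self]

lemma hg_const_ne (N : ℕ) : constantCoeff (hgSeries N) ≠ 0 := by
  rw [hg_const]; exact one_ne_zero

lemma hg_ne_zero (N : ℕ) : hgSeries N ≠ 0 := fun h => hg_const_ne N (by rw [h]; simp)

lemma hg_inv_mul (N : ℕ) : (hgSeries N)⁻¹ * hgSeries N = 1 :=
  PowerSeries.inv_mul_cancel _ (hg_const_ne N)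

-- X * f' = N(1-f) + X f
lemma key2 (N : ℕ) :
    X * (d⁄dX ℚ (hgSeries N)) = (C (N : ℚ)) * (1 - hgSeries N) + X * hgSeries N := by
  ext n
  cases n with
  | zero =>
      simp [coeff_zero_eq_constantCoeff, hg_const]
  | succ n =>
      rw [map_add, coeff_succ_X_mul, coeff_succ_X_mul, coeff_derivative, coeff_C_mul, map_sub,
        hg_coeff, hg_coeff]
      have h1 : coeff (n+1) (1 : ℚ⟦X⟧) = 0 := by
        simp [coeff_one]
      rw [h1]
      have h2 : (N + (n+1)).factorial = (N + n + 1) * (N + n).factorial := by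
        rw [show N + (n+1) = (N + n) + 1 by ring, Nat.factorial_succ]
      rw [h2]
      have h3 : ((N+n).factorial : ℚ) ≠ 0 := Nat.cast_ne_zero.mpr (Nat.factorial_ne_zero _)
      have h4 : ((N:ℚ) + n + 1) ≠ 0 := by positivity
      field_simp
      
      push_cast; ring

-- fm = 1 + (1/N) X f
lemma key1 (N : ℕ) (hN : 1 ≤ N) :
    hgSeries (N - 1) = 1 + (C ((N : ℚ)⁻¹)) * (X * hgSeries N) := by
  ext n
  cases n with
  | zero =>
      simp [hg_const]
  | succ n =>
      rw [hg_coeff, map_add, coeff_C_mul, coeff_succ_X_mul, hg_coeff]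
      have h1 : coeff (n+1) (1 : ℚ⟦X⟧) = 0 := by simp [coeff_one]
      rw [h1, zero_add]
      have h2 : N - 1 + (n + 1) = N + n := by omega
      rw [h2]
      have h3 : (N : ℚ) * ((N-1).factorial : ℚ) = (N.factorial : ℚ) := by
        rw [← Nat.cast_mul, Nat.mul_factorial_pred (by omega)]
      have h4 : ((N+n).factorial : ℚ) ≠ 0 := Nat.cast_ne_zero.mpr (Nat.factorial_ne_zero _)
      have h5 : (N : ℚ) ≠ 0 := by positivity
      field_simp
      rw [← h3]; ring

-- the series identity g' + g = gm + g' gm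
lemma keyS (N : ℕ) (hN : 1 ≤ N) :
    d⁄dX ℚ (hgSeries N)⁻¹ + (hgSeries N)⁻¹ =
      (hgSeries (N-1))⁻¹ + (d⁄dX ℚ (hgSeries N)⁻¹) * (hgSeries (N-1))⁻¹ := by
  set f := hgSeries N with hf
  set fm := hgSeries (N-1) with hfm
  set g := f⁻¹ with hg
  set gm := fm⁻¹ with hgm
  set dg := d⁄dX ℚ g with hdg
  set df := d⁄dX ℚ f with hdf
  have h1 : g * f = 1 := hg_inv_mul N
  have h2 : gm * fm = 1 := hg_inv_mul (N-1)
  have h3 : g * df + f * dg = 0 := by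
    have h := congrArg (d⁄dX ℚ) h1
    rw [Derivation.leibniz, Derivation.map_one_eq_zero] at h
    rw [← h]
    simp only [smul_eq_mul]
    rfl
  have h4 : fm = 1 + C ((N:ℚ)⁻¹) * (X * f) := key1 N hN
  have h5 : X * df = (C (N : ℚ)) * (1 - f) + X * f := key2 N
  have hc : (C ((N:ℚ)⁻¹)) * (C (N : ℚ)) = 1 := by
    rw [← map_mul, inv_mul_cancel₀ (by positivity : (N:ℚ) ≠ 0), map_one]
  have hne : f * fm ≠ 0 := mul_ne_zero (hg_ne_zero N) (hg_ne_zero (N-1))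
  apply mul_right_cancel₀ hne
  linear_combination fm * h1 - f * h2 - dg*f*h2 + dg*f*h4 + (C ((N:ℚ)⁻¹))*X*f*h3
    - (C ((N:ℚ)⁻¹))*g*f*h5 - (1-f)*h1 - g*f*(1-f)*hc - (C ((N:ℚ)⁻¹))*X*f*h1 + h4

lemma inv_coeff_zero (N : ℕ) : coeff 0 (hgSeries N)⁻¹ = 1 := by
  rw [coeff_zero_eq_constantCoeff, PowerSeries.constantCoeff_inv, hg_const, inv_one]

lemma inv_coeff_one (N : ℕ) : coeff 1 (hgSeries N)⁻¹ = -(1 / ((N : ℚ) + 1)) := by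
  have h : coeff 1 ((hgSeries N)⁻¹ * hgSeries N) = 0 := by
    rw [hg_inv_mul]; simp [coeff_one]
  rw [coeff_mul, Finset.Nat.sum_antidiagonal_eq_sum_range_succ_mk] at h
  simp only [Finset.sum_range_succ, Finset.sum_range_zero, zero_add] at h
  rw [inv_coeff_zero, hg_coeff, hg_coeff] at h
  have h5 : ((N).factorial : ℚ) ≠ 0 := Nat.cast_ne_zero.mpr (Nat.factorial_ne_zero _)
  have h2 : (N + 1).factorial = (N + 1) * N.factorial := Nat.factorial_succ N
  have h6 : ((N:ℚ)+1) ≠ 0 := by positivity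
  rw [h2] at h
  simp only [Nat.add_sub_cancel, Nat.sub_self, add_zero] at h
  push_cast at h
  field_simp at h ⊢
  have h7 : (coeff 1 (hgSeries N)⁻¹ * ((N:ℚ)+1) + 1) * (N.factorial : ℚ) = 0 := by
    linear_combination (N.factorial : ℚ) * h
  rcases mul_eq_zero.mp h7 with h8 | h8
  · linarith
  · exact absurd h8 h5

-- the recurrence in coefficient (u, v) form
lemma recU (N n : ℕ) (hN : 1 ≤ N) (hn : 1 ≤ n) :
    (1 + (n : ℚ) / N) * coeff n (hgSeries N)⁻¹ =
      coeff n (hgSeries (N-1))⁻¹ +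
      ∑ i ∈ Finset.range (n - 1),
        coeff (i+1) (hgSeries N)⁻¹ * ((i : ℚ) + 1) * coeff (n - i) (hgSeries (N-1))⁻¹ := by
  obtain ⟨n', rfl⟩ : ∃ n', n = n' + 1 := ⟨n - 1, by omega⟩
  have h := congrArg (coeff (n' + 1)) (keyS N hN)
  rw [map_add, map_add, coeff_mul, Finset.Nat.sum_antidiagonal_eq_sum_range_succ_mk] at h
  simp only [coeff_derivative] at h
  rw [Finset.sum_range_succ, Finset.sum_range_succ] at h
  simp only [Nat.sub_self, Nat.add_sub_cancel_left] at h
  rw [inv_coeff_zero] at h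
  have hcast : ((N - 1 : ℕ) : ℚ) + 1 = (N : ℚ) := by
    rw [Nat.cast_sub hN]; push_cast; ring
  have hone : coeff 1 (hgSeries (N-1))⁻¹ = -(1 / ((N:ℚ))) := by
    rw [inv_coeff_one, hcast]
  rw [hone] at h
  have hN0 : (N : ℚ) ≠ 0 := by positivity
  simp only [Nat.add_sub_cancel] at h ⊢
  push_cast at h ⊢
  linear_combination h

-- the recurrence in hB form
lemma recR (N n : ℕ) (hN : 1 ≤ N) (hn : 1 ≤ n) :
    hB N n = ((N:ℚ)/((N:ℚ)+n)) *
      (hB (N-1) n + ∑ j ∈ Finset.Ico 1 n,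
        hB (N-1) (n-j+1) * ((n.choose (n-j+1)):ℚ) * hB N j) := by
  rw [Finset.sum_Ico_eq_sum_range]
  have hterm : ∀ i ∈ Finset.range (n-1),
      hB (N-1) (n-(1+i)+1) * ((n.choose (n-(1+i)+1)):ℚ) * hB N (1+i) =
      (n.factorial : ℚ) *
        (coeff (i+1) (hgSeries N)⁻¹ * ((i : ℚ) + 1) * coeff (n - i) (hgSeries (N-1))⁻¹) := by
    intro i hi
    rw [Finset.mem_range] at hi
    have h1 : n - (1+i) + 1 = n - i := by omega
    rw [h1]
    unfold hB
    have h2 : n - i ≤ n := by omega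
    have h3 := Nat.choose_mul_factorial_mul_factorial h2
    have h4 : n - (n - i) = i := by omega
    rw [h4] at h3
    have h5 : (1+i).factorial = (1+i) * i.factorial := by
      rw [show 1 + i = i + 1 by ring, Nat.factorial_succ]
    have h3' : ((n.choose (n-i)):ℚ) * ((n-i).factorial : ℚ) * (i.factorial : ℚ)
        = (n.factorial : ℚ) := by exact_mod_cast congrArg (Nat.cast : ℕ → ℚ) h3
    rw [h5, show 1 + i = i + 1 by ring]
    push_cast
    linear_combination (((i:ℚ)+1) * coeff (i+1) (hgSeries N)⁻¹
      * coeff (n - i) (hgSeries (N-1))⁻¹) * h3'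
  rw [Finset.sum_congr rfl hterm, ← Finset.mul_sum]
  have hrec := recU N n hN hn
  have hN0 : (N : ℚ) ≠ 0 := by positivity
  have hNn0 : (N : ℚ) + n ≠ 0 := by positivity
  have key : ((N:ℚ)/((N:ℚ)+n)) * (1 + (n:ℚ)/N) = 1 := by field_simp
  unfold hB
  linear_combination (((N:ℚ)/((N:ℚ)+(n:ℚ))) * (n.factorial:ℚ)) * hrec
    - ((n.factorial:ℚ) * coeff n (hgSeries N)⁻¹) * key

noncomputable def step (N a b : ℕ) : ℚ :=
  hB (N - 1) (a - b + 1) * ((a.choose (a - b + 1)) : ℚ) * ((N : ℚ) / ((N : ℚ) + b))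

open scoped Classical in
noncomputable def T (N m n : ℕ) : ℚ :=
  ∑ c ∈ Finset.univ.filter (fun c : Fin (m + 1) → Fin (n + 1) =>
      (c 0 : ℕ) = n ∧ StrictAnti c ∧ 1 ≤ (c (Fin.last m) : ℕ)),
    hB (N - 1) (c (Fin.last m)) * ∏ k : Fin m, step N (c k.castSucc) (c k.succ)

lemma chain_bound {m n : ℕ} {c : Fin (m+1) → Fin (n+1)} (hc : StrictAnti c)
    (k : Fin (m+1)) : (c k : ℕ) + (k : ℕ) ≤ (c 0 : ℕ) := by
  induction k using Fin.induction with
  | zero => simp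
  | succ k ih =>
      have h1 : c k.succ < c k.castSucc := hc (Fin.castSucc_lt_succ (i := k))
      have h2 : (c k.succ : ℕ) < (c k.castSucc : ℕ) := h1
      have h3 : (k.castSucc : ℕ) = (k : ℕ) := rfl
      have h4 : (k.succ : ℕ) = (k : ℕ) + 1 := rfl
      omega

lemma Tvanish (N m n : ℕ) (h : n ≤ m) : T N m n = 0 := by
  rw [T]
  rw [Finset.filter_false_of_mem, Finset.sum_empty]
  rintro c - ⟨h0, hA, h1⟩
  have h2 := chain_bound hA (Fin.last m)
  rw [h0] at h2
  have h3 : ((Fin.last m : Fin (m+1)) : ℕ) = m := rfl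
  omega

lemma T0 (N n : ℕ) (hn : 1 ≤ n) : T N 0 n = hB (N - 1) n := by
  rw [T]
  have hlt : n < n + 1 := Nat.lt_succ_self n
  have hset : (Finset.univ.filter (fun c : Fin 1 → Fin (n + 1) =>
      (c 0 : ℕ) = n ∧ StrictAnti c ∧ 1 ≤ (c (Fin.last 0) : ℕ)))
      = {fun _ => (⟨n, hlt⟩ : Fin (n+1))} := by
    apply Finset.eq_singleton_iff_unique_mem.mpr
    constructor
    · rw [Finset.mem_filter]
      refine ⟨Finset.mem_univ _, rfl, ?_, ?_⟩
      · intro a b hab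
        exact absurd (Subsingleton.elim a b) (ne_of_lt hab)
      · exact hn
    · intro c hc
      rw [Finset.mem_filter] at hc
      funext k
      rw [Subsingleton.elim k 0]
      exact Fin.ext hc.2.1
  rw [hset, Finset.sum_singleton]
  simp

open scoped Classical

lemma Tfiber (N m n j : ℕ) (hj1 : 1 ≤ j) (hjn : j < n) :
    ∑ c ∈ (Finset.univ.filter (fun c : Fin (m + 1 + 1) → Fin (n + 1) =>
        (c 0 : ℕ) = n ∧ StrictAnti c ∧ 1 ≤ (c (Fin.last (m+1)) : ℕ))).filter
        (fun c => (c 1 : ℕ) = j),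
      hB (N - 1) (c (Fin.last (m+1))) * ∏ k : Fin (m+1), step N (c k.castSucc) (c k.succ)
    = step N n j * T N m j := by
  rw [T, Finset.mul_sum]
  have hone : ((0 : Fin (m+1)).succ) = (1 : Fin (m+1+1)) := by
    ext; simp [Fin.val_one]
  refine Finset.sum_nbij'
    (i := fun c (k : Fin (m+1)) => (⟨min (c k.succ : ℕ) j,
      Nat.lt_succ_of_le (Nat.min_le_right _ _)⟩ : Fin (j+1)))
    (j := fun c' (k : Fin (m+1+1)) => Fin.cases (⟨n, Nat.lt_succ_self n⟩ : Fin (n+1))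
      (fun l => (⟨min (c' l : ℕ) n, Nat.lt_succ_of_le (Nat.min_le_right _ _)⟩ : Fin (n+1))) k)
    ?_ ?_ ?_ ?_ ?_
  · -- forward membership
    intro c hc
    rw [Finset.mem_filter, Finset.mem_filter] at hc
    obtain ⟨⟨-, h0, hA, hlast⟩, h1⟩ := hc
    have hle : ∀ k : Fin (m+1), (c k.succ : ℕ) ≤ j := by
      intro k
      have : c k.succ ≤ c 1 := by
        apply hA.antitone
        rw [Fin.le_def]
        simp [Fin.val_one]
      have h2 : (c k.succ : ℕ) ≤ (c 1 : ℕ) := this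
      omega
    rw [Finset.mem_filter]
    refine ⟨Finset.mem_univ _, ?_, ?_, ?_⟩
    · show min (c (0 : Fin (m+1)).succ : ℕ) j = j
      rw [hone, h1]; omega
    · intro a b hab
      rw [Fin.lt_def]
      show min (c b.succ : ℕ) j < min (c a.succ : ℕ) j
      have h2 : (c b.succ : ℕ) < (c a.succ : ℕ) := hA (Fin.succ_lt_succ_iff.mpr hab)
      have := hle a; have := hle b
      omega
    · have hsl : (Fin.last m).succ = Fin.last (m+1) := rfl
      show 1 ≤ min (c (Fin.last m).succ : ℕ) j
      rw [hsl]
      omega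
  · -- backward membership
    intro c' hc'
    rw [Finset.mem_filter] at hc'
    obtain ⟨-, h0, hA, hlast⟩ := hc'
    have hle : ∀ l : Fin (m+1), (c' l : ℕ) ≤ j := by
      intro l
      have : c' l ≤ c' 0 := hA.antitone (Fin.zero_le l)
      have h2 : (c' l : ℕ) ≤ (c' 0 : ℕ) := this
      omega
    rw [Finset.mem_filter, Finset.mem_filter]
    refine ⟨⟨Finset.mem_univ _, ?_, ?_, ?_⟩, ?_⟩
    · simp
    · intro a b hab
      induction a using Fin.cases with
      | zero =>
          induction b using Fin.cases with
          | zero => exact absurd hab (lt_irrefl _)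
          | succ l =>
              rw [Fin.lt_def]
              show min (c' l : ℕ) n < n
              have := hle l; omega
      | succ l1 =>
          induction b using Fin.cases with
          | zero =>
              exfalso
              rw [Fin.lt_def] at hab
              simp at hab
          | succ l2 =>
              have h2 : l1 < l2 := Fin.succ_lt_succ_iff.mp hab
              rw [Fin.lt_def]
              show min (c' l2 : ℕ) n < min (c' l1 : ℕ) n
              have h3 : (c' l2 : ℕ) < (c' l1 : ℕ) := hA h2
              have := hle l1; have := hle l2
              omega
    · have hsl : (Fin.last m).succ = Fin.last (m+1) := rfl
      rw [← hsl]
      show 1 ≤ min (c' (Fin.last m) : ℕ) n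
      omega
    · rw [← hone]
      show min (c' 0 : ℕ) n = j
      rw [h0]; omega
  · -- left inverse
    intro c hc
    rw [Finset.mem_filter, Finset.mem_filter] at hc
    obtain ⟨⟨-, h0, hA, hlast⟩, h1⟩ := hc
    have hle : ∀ k : Fin (m+1), (c k.succ : ℕ) ≤ j := by
      intro k
      have : c k.succ ≤ c 1 := by
        apply hA.antitone
        rw [Fin.le_def]
        simp [Fin.val_one]
      have h2 : (c k.succ : ℕ) ≤ (c 1 : ℕ) := this
      omega
    funext k
    induction k using Fin.cases with
    | zero =>
        simp only [Fin.cases_zero]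
        exact Fin.ext h0.symm
    | succ l =>
        simp only [Fin.cases_succ]
        apply Fin.ext
        show min (min (c l.succ : ℕ) j) n = (c l.succ : ℕ)
        have := hle l
        have h2 : (c l.succ : ℕ) < n + 1 := (c l.succ).isLt
        omega
  · -- right inverse
    intro c' hc'
    rw [Finset.mem_filter] at hc'
    obtain ⟨-, h0, hA, hlast⟩ := hc'
    have hle : ∀ l : Fin (m+1), (c' l : ℕ) ≤ j := by
      intro l
      have : c' l ≤ c' 0 := hA.antitone (Fin.zero_le l)
      have h2 : (c' l : ℕ) ≤ (c' 0 : ℕ) := this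
      omega
    funext k
    apply Fin.ext
    show min ((Fin.cases _ _ k.succ : Fin (n+1)) : ℕ) j = (c' k : ℕ)
    simp only [Fin.cases_succ]
    have := hle k
    omega
  · -- value equation
    intro c hc
    rw [Finset.mem_filter, Finset.mem_filter] at hc
    obtain ⟨⟨-, h0, hA, hlast⟩, h1⟩ := hc
    have hle : ∀ k : Fin (m+1), (c k.succ : ℕ) ≤ j := by
      intro k
      have : c k.succ ≤ c 1 := by
        apply hA.antitone
        rw [Fin.le_def]
        simp [Fin.val_one]
      have h2 : (c k.succ : ℕ) ≤ (c 1 : ℕ) := this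
      omega
    have e1 : step N ((c (0 : Fin (m+1)).castSucc : ℕ)) ((c (0 : Fin (m+1)).succ : ℕ))
        = step N n j := by
      rw [Fin.castSucc_zero, hone, h0, h1]
    have e4 : ∏ k : Fin m, step N ((c k.succ.castSucc : ℕ)) ((c k.succ.succ : ℕ)) =
        ∏ k : Fin m, step N ((min (c k.castSucc.succ : ℕ) j)) ((min (c k.succ.succ : ℕ) j)) := by
      apply Finset.prod_congr rfl
      intro k _
      have ha := hle k.castSucc
      have hb := hle k.succ
      rw [← Fin.succ_castSucc]
      congr 1
      · omega
      · omega
    have hsl : (Fin.last m).succ = Fin.last (m+1) := rfl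
    have e3 : (min ((c (Fin.last m).succ : ℕ)) j) = (c (Fin.last (m+1)) : ℕ) := by
      have := hle (Fin.last m)
      rw [hsl] at this ⊢
      omega
    rw [Fin.prod_univ_succ, e1]
    simp only [Fin.val_mk]
    rw [e3, ← e4]
    ring

lemma Tsucc (N m n : ℕ) : T N (m+1) n = ∑ j ∈ Finset.Ico 1 n, step N n j * T N m j := by
  rw [T]
  have hmaps : ∀ c ∈ Finset.univ.filter (fun c : Fin (m + 1 + 1) → Fin (n + 1) =>
      (c 0 : ℕ) = n ∧ StrictAnti c ∧ 1 ≤ (c (Fin.last (m+1)) : ℕ)),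
      (c 1 : ℕ) ∈ Finset.Ico 1 n := by
    intro c hc
    rw [Finset.mem_filter] at hc
    obtain ⟨-, h0, hA, hlast⟩ := hc
    have h2 : c (Fin.last (m+1)) ≤ c 1 := by
      apply hA.antitone
      rw [Fin.le_def]
      simp [Fin.val_one]
    have h3 : c 1 < c 0 := by
      apply hA
      rw [Fin.lt_def]
      simp [Fin.val_one]
    have h4 : (c (Fin.last (m+1)) : ℕ) ≤ (c 1 : ℕ) := h2
    have h5 : (c 1 : ℕ) < (c 0 : ℕ) := h3
    rw [Finset.mem_Ico]
    omega
  rw [← Finset.sum_fiberwise_of_maps_to hmaps]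
  refine Finset.sum_congr rfl (fun j hj => ?_)
  rw [Finset.mem_Ico] at hj
  exact Tfiber N m n j hj.1 hj.2

lemma Trange (N j K : ℕ) (h : j ≤ K) :
    ∑ m ∈ Finset.range K, T N m j = ∑ m ∈ Finset.range j, T N m j := by
  symm
  apply Finset.sum_subset (Finset.range_subset_range.mpr h)
  intro m _ hm
  rw [Finset.mem_range] at hm
  exact Tvanish N m j (by omega)

lemma mainT (N : ℕ) (hN : 1 ≤ N) : ∀ n, 1 ≤ n →
    hB N n = ((N:ℚ)/((N:ℚ)+n)) * ∑ m ∈ Finset.range n, T N m n := by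
  intro n
  induction n using Nat.strong_induction_on with
  | _ n ih =>
    intro hn
    obtain ⟨n', rfl⟩ : ∃ n', n = n'+1 := ⟨n-1, by omega⟩
    rw [Finset.sum_range_succ', T0 N _ hn]
    have e1 : ∀ m ∈ Finset.range n',
        T N (m+1) (n'+1) = ∑ j ∈ Finset.Ico 1 (n'+1), step N (n'+1) j * T N m j :=
      fun m _ => Tsucc N m (n'+1)
    rw [Finset.sum_congr rfl e1, Finset.sum_comm]
    have e2 : ∀ j ∈ Finset.Ico 1 (n'+1),
        ∑ m ∈ Finset.range n', step N (n'+1) j * T N m j =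
        hB (N-1) ((n'+1)-j+1) * (((n'+1).choose ((n'+1)-j+1)) : ℚ) * hB N j := by
      intro j hj
      rw [Finset.mem_Ico] at hj
      rw [← Finset.mul_sum, Trange N j n' (by omega)]
      have hih := ih j (by omega) hj.1
      rw [step, hih]
      ring
    rw [Finset.sum_congr rfl e2, recR N (n'+1) hN hn]
    ring


open scoped Classical in
/-- Here a strictly decreasing chain `n = i₀ > i₁ > ⋯ > i_m ≥ 1` is encoded as a
strictly antitone function `c : Fin (m+1) → Fin (n+1)` with `c 0 = n` and
`1 ≤ c (Fin.last m)`; for `k : Fin m`, `c k.castSucc` is `i_{k-1}` and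
`c k.succ` is `i_k` (1-indexed as in the paper). -/
theorem stmt9 (N n : ℕ) (hN : 2 ≤ N) (hn : 1 ≤ n) :
    hB N n = ((N : ℚ) / ((N : ℚ) + n)) *
      ∑ m ∈ Finset.range n,
        ∑ c ∈ Finset.univ.filter (fun c : Fin (m + 1) → Fin (n + 1) =>
            (c 0 : ℕ) = n ∧ StrictAnti c ∧ 1 ≤ (c (Fin.last m) : ℕ)),
          hB (N - 1) (c (Fin.last m)) *
            ∏ k : Fin m,
              (hB (N - 1) ((c k.castSucc : ℕ) - (c k.succ : ℕ) + 1) *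
                ((c k.castSucc : ℕ).choose ((c k.castSucc : ℕ) - (c k.succ : ℕ) + 1) : ℚ) *
                ((N : ℚ) / ((N : ℚ) + (c k.succ : ℕ)))) := by
  rw [mainT N (by omega) n hn]
  congr 1
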